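/- Let X be a Banach space and let Y be a Banach space whose dual space Y* is uniformly convex (equivalently, Y is uniformly smooth). If the pair (X, Y) has the Bishop–Phelps–Bollobás property for operators (BPBp), then the pair (X, Y) has the Bishop–Phelps–Bollobás–Zizler property (BPBZp). -/

import Mathlib

/-- The Bishop–Phelps–Bollobás property for operators (BPBp) for a pair of normed spaces. -/
def BPBp (𝕂 : Type*) [RCLike 𝕂] (X Y : Type*) [NormedAddCommGroup X] [NormedSpace 𝕂 X]
    [NormedAddCommGroup Y] [NormedSpace 𝕂 Y] : Prop :=
  ∀ ε : ℝ, 0 < ε → ∃ η : ℝ, 0 < η ∧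
    ∀ (T : X →L[𝕂] Y) (x₀ : X),
      ‖T‖ = 1 → ‖x₀‖ = 1 → 1 - η < ‖T x₀‖ →
      ∃ (S : X →L[𝕂] Y) (x₁ : X),
        ‖S‖ = 1 ∧ ‖x₁‖ = 1 ∧ ‖S x₁‖ = 1 ∧ ‖x₁ - x₀‖ < ε ∧ ‖S - T‖ < ε

/-- The Bishop–Phelps–Bollobás–Zizler property (BPBZp) for a pair of normed spaces. -/
def BPBZp (𝕂 : Type*) [RCLike 𝕂] (X Y : Type*) [NormedAddCommGroup X] [NormedSpace 𝕂 X]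
    [NormedAddCommGroup Y] [NormedSpace 𝕂 Y] : Prop :=
  ∀ ε : ℝ, 0 < ε → ∃ η : ℝ, 0 < η ∧
    ∀ (T : X →L[𝕂] Y) (x₀ : X) (y₀ : Y →L[𝕂] 𝕂),
      ‖T‖ = 1 → ‖x₀‖ = 1 → ‖y₀‖ = 1 → 1 - η < ‖y₀ (T x₀)‖ →
      ∃ (S : X →L[𝕂] Y) (x₁ : X) (y₁ : Y →L[𝕂] 𝕂),
        ‖S‖ = 1 ∧ ‖x₁‖ = 1 ∧ ‖y₁‖ = 1 ∧ ‖y₁ (S x₁)‖ = 1 ∧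
        ‖x₁ - x₀‖ < ε ∧ ‖y₁ - y₀‖ < ε ∧ ‖S - T‖ < ε

/-- If `Y*` is uniformly convex (equivalently, `Y` is uniformly smooth) and `(X, Y)` has the
BPBp, then `(X, Y)` has the BPBZp. -/
theorem bpbzp_of_bpbp_of_uniformConvexSpace_dual (𝕂 : Type*) [RCLike 𝕂] (X Y : Type*)
    [NormedAddCommGroup X] [NormedSpace 𝕂 X] [CompleteSpace X]
    [NormedAddCommGroup Y] [NormedSpace 𝕂 Y] [CompleteSpace Y]
    [UniformConvexSpace (StrongDual 𝕂 Y)]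
    (h : BPBp 𝕂 X Y) : BPBZp 𝕂 X Y := by
  intro ε hε
  -- uniform convexity modulus for ε on the sphere of Y*
  obtain ⟨δ₀, hδ₀, hδ⟩ :=
    exists_forall_sphere_dist_add_le_two_sub (StrongDual 𝕂 Y) hε
  set δ : ℝ := min δ₀ (1/2) with hδdef
  have hδpos : 0 < δ := lt_min hδ₀ (by norm_num)
  have hδle : δ ≤ 1/2 := min_le_right _ _
  have hδle' : δ ≤ δ₀ := min_le_left _ _
  -- BPBp modulus for ε₁ := min ε (δ/4)
  set ε₁ : ℝ := min ε (δ/4) with hε₁def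
  have hε₁pos : 0 < ε₁ := lt_min hε (by positivity)
  obtain ⟨η₁, hη₁, hBP⟩ := h ε₁ hε₁pos
  refine ⟨min η₁ (δ/4), lt_min hη₁ (by positivity), ?_⟩
  intro T x₀ y₀ hT hx₀ hy₀ hval
  have hTx₀ : 1 - η₁ < ‖T x₀‖ := by
    calc 1 - η₁ ≤ 1 - min η₁ (δ/4) := by
          have := min_le_left η₁ (δ/4); linarith
      _ < ‖y₀ (T x₀)‖ := hval
      _ ≤ ‖y₀‖ * ‖T x₀‖ := y₀.le_opNorm _
      _ = ‖T x₀‖ := by rw [hy₀, one_mul]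
  obtain ⟨S, x₁, hS, hx₁, hSx₁, hxd, hSd⟩ := hBP T x₀ hT hx₀ hTx₀
  -- the functional attaining the norm at S x₁
  have hSx₁ne : S x₁ ≠ 0 := by
    intro hzero; rw [hzero, norm_zero] at hSx₁; norm_num at hSx₁
  obtain ⟨f, hf, hfval⟩ := exists_dual_vector 𝕂 (S x₁) (norm_ne_zero_iff.mpr hSx₁ne)
  set c : 𝕂 := y₀ (S x₁) with hc
  -- estimate ‖c‖
  have hdiff : ‖S x₁ - T x₀‖ ≤ 2 * ε₁ := by
    have h1 : ‖S x₁ - T x₁‖ ≤ ‖S - T‖ * ‖x₁‖ := (S - T).le_opNorm x₁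
    have h2 : ‖T x₁ - T x₀‖ ≤ ‖T‖ * ‖x₁ - x₀‖ := by
      simpa using T.le_opNorm (x₁ - x₀)
    calc ‖S x₁ - T x₀‖ = ‖(S x₁ - T x₁) + (T x₁ - T x₀)‖ := by congr 1; abel
      _ ≤ ‖S x₁ - T x₁‖ + ‖T x₁ - T x₀‖ := norm_add_le _ _
      _ ≤ ‖S - T‖ * ‖x₁‖ + ‖T‖ * ‖x₁ - x₀‖ := add_le_add h1 h2
      _ ≤ ε₁ * 1 + 1 * ε₁ := by
          apply add_le_add
          · rw [hx₁]; exact mul_le_mul_of_nonneg_right hSd.le (by norm_num)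
          · rw [hT]; exact mul_le_mul_of_nonneg_left hxd.le (by norm_num)
      _ = 2 * ε₁ := by ring
  have hcbig : 1 - 3/4 * δ < ‖c‖ := by
    have h3 : ‖y₀ (T x₀)‖ - ‖y₀ (S x₁)‖ ≤ ‖y₀ (S x₁) - y₀ (T x₀)‖ := by
      have h' := norm_sub_norm_le (y₀ (T x₀)) (y₀ (S x₁))
      rwa [norm_sub_rev] at h'
    have h4 : ‖y₀ (S x₁) - y₀ (T x₀)‖ ≤ 2 * ε₁ := by
      calc ‖y₀ (S x₁) - y₀ (T x₀)‖ = ‖y₀ (S x₁ - T x₀)‖ := by rw [map_sub]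
        _ ≤ ‖y₀‖ * ‖S x₁ - T x₀‖ := y₀.le_opNorm _
        _ ≤ 1 * (2 * ε₁) := by
            rw [hy₀]; exact mul_le_mul_of_nonneg_left hdiff (by norm_num)
        _ = 2 * ε₁ := by ring
    have h5 : ε₁ ≤ δ/4 := min_le_right _ _
    have h6 : min η₁ (δ/4) ≤ δ/4 := min_le_right _ _
    have h7 : 1 - min η₁ (δ/4) < ‖y₀ (T x₀)‖ := hval
    have hcc : ‖c‖ = ‖y₀ (S x₁)‖ := by rw [hc]
    linarith
  have hcpos : (0:ℝ) < ‖c‖ := by linarith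
  have hcne : c ≠ 0 := fun h0 => by simp [h0] at hcpos
  -- rotated functional
  set lam : 𝕂 := c / ((‖c‖ : ℝ) : 𝕂) with hlam
  have hnormc : ‖((‖c‖ : ℝ) : 𝕂)‖ = ‖c‖ := by
    rw [RCLike.norm_ofReal, abs_of_nonneg (norm_nonneg c)]
  have hlamnorm : ‖lam‖ = 1 := by
    rw [hlam, norm_div, hnormc, div_self (ne_of_gt hcpos)]
  set y₁ : Y →L[𝕂] 𝕂 := lam • f with hy₁
  have hy₁norm : ‖y₁‖ = 1 := by
    have : ‖y₁‖ = ‖lam‖ * ‖f‖ := norm_smul lam f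
    rw [this, hlamnorm, hf, one_mul]
  have hfSx₁ : f (S x₁) = 1 := by
    rw [hfval, hSx₁]; norm_num
  have hy₁val : y₁ (S x₁) = lam := by
    show (lam • f) (S x₁) = lam
    rw [ContinuousLinearMap.smul_apply, hfSx₁, smul_eq_mul, mul_one]
  have hclam : c = lam * ((‖c‖ : ℝ) : 𝕂) := by
    rw [hlam, div_mul_cancel₀]
    intro h0
    rw [h0, norm_zero] at hnormc
    exact ne_of_gt hcpos hnormc.symm
  -- norm of the sum is large
  have hsum : 2 - δ < ‖y₀ + y₁‖ := by
    have hval' : (y₀ + y₁) (S x₁) = lam * (((‖c‖ : ℝ) : 𝕂) + 1) := by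
      have h8 : (y₀ + y₁) (S x₁) = c + lam := by
        rw [ContinuousLinearMap.add_apply, hy₁val, hc]
      rw [h8, mul_add, mul_one, ← hclam]
    have hnv : ‖(y₀ + y₁) (S x₁)‖ = ‖c‖ + 1 := by
      rw [hval', norm_mul, hlamnorm, one_mul]
      have h9 : ((‖c‖ : ℝ) : 𝕂) + 1 = ((‖c‖ + 1 : ℝ) : 𝕂) := by push_cast; ring
      rw [h9, RCLike.norm_ofReal, abs_of_nonneg (by positivity)]
    have hle : ‖(y₀ + y₁) (S x₁)‖ ≤ ‖y₀ + y₁‖ := by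
      calc ‖(y₀ + y₁) (S x₁)‖ ≤ ‖y₀ + y₁‖ * ‖S x₁‖ := (y₀ + y₁).le_opNorm _
        _ = ‖y₀ + y₁‖ := by rw [hSx₁, mul_one]
    rw [hnv] at hle
    linarith
  -- uniform convexity: y₁ is close to y₀
  have hclose : ‖y₁ - y₀‖ < ε := by
    by_contra hge
    push_neg at hge
    have := hδ hy₀ hy₁norm (by rwa [norm_sub_rev] at hge)
    linarith
  refine ⟨S, x₁, y₁, hS, hx₁, hy₁norm, ?_, ?_, hclose, ?_⟩
  · rw [hy₁val, hlamnorm]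
  · exact lt_of_lt_of_le hxd (min_le_left _ _)
  · exact lt_of_lt_of_le hSd (min_le_left _ _)
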